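/- Let A be a weakly noetherian B₁-algebra. Then the set of minimal prime ideals of A (prime ideals minimal with respect to inclusion among all prime ideals of A) is finite. -/

import Mathlib

/-- An ideal `I` of a `B₁`-algebra is *saturated* if `y ∈ I` and `x + y = y` imply `x ∈ I`. -/
def IsSaturated {A : Type*} [CommSemiring A] (I : Ideal A) : Prop :=
  ∀ x y : A, y ∈ I → x + y = y → x ∈ I

/-- `A` is *weakly noetherian* if every ascending chain of saturated ideals is eventually
stationary. -/
def WeaklyNoetherian (A : Type*) [CommSemiring A] : Prop :=
  ∀ f : ℕ → Ideal A, (∀ n, IsSaturated (f n)) → (∀ n, f n ≤ f (n + 1)) →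
    ∃ N, ∀ n, N ≤ n → f n = f N

section
variable {A : Type*} [CommSemiring A]

/-- Saturation of an ideal. -/
def satur (I : Ideal A) : Ideal A where
  carrier := {x | ∃ y ∈ I, x + y = y}
  add_mem' := by
    rintro a b ⟨y, hy, hay⟩ ⟨z, hz, hbz⟩
    exact ⟨y + z, I.add_mem hy hz, by rw [add_add_add_comm, hay, hbz]⟩
  zero_mem' := ⟨0, I.zero_mem, by simp⟩
  smul_mem' := by
    rintro c x ⟨y, hy, h⟩
    exact ⟨c * y, I.mul_mem_left c hy, by rw [smul_eq_mul, ← mul_add, h]⟩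

lemma mem_satur {I : Ideal A} {x : A} : x ∈ satur I ↔ ∃ y ∈ I, x + y = y := Iff.rfl

lemma le_satur (hchar : (1 : A) + 1 = 1) (I : Ideal A) : I ≤ satur I := by
  intro x hx
  refine ⟨x, hx, ?_⟩
  have : (1 + 1) * x = 1 * x := by rw [hchar]
  rwa [add_mul, one_mul] at this

lemma satur_isSaturated (I : Ideal A) : IsSaturated (satur I) := by
  rintro x y ⟨z, hz, hyz⟩ hxy
  refine ⟨z, hz, ?_⟩
  calc x + z = x + (y + z) := by rw [hyz]
    _ = (x + y) + z := (add_assoc _ _ _).symm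
    _ = y + z := by rw [hxy]
    _ = z := hyz

lemma satur_le {I : Ideal A} (h : IsSaturated I) : satur I ≤ I := by
  rintro x ⟨y, hy, hxy⟩; exact h x y hy hxy

lemma satur_mono {I J : Ideal A} (h : I ≤ J) : satur I ≤ satur J := by
  rintro x ⟨y, hy, hxy⟩; exact ⟨y, h hy, hxy⟩

lemma satur_mul_satur_le (J K : Ideal A) : satur J * satur K ≤ satur (J * K) := by
  refine Ideal.mul_le.mpr ?_
  rintro x ⟨j, hj, hxj⟩ y ⟨k, hk, hyk⟩
  refine ⟨j * k, Ideal.mul_mem_mul hj hk, ?_⟩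
  have h1 : x * y + j * y = j * y := by rw [← add_mul, hxj]
  have h2 : j * y + j * k = j * k := by rw [← mul_add, hyk]
  calc x * y + j * k = x * y + (j * y + j * k) := by rw [h2]
    _ = (x * y + j * y) + j * k := (add_assoc _ _ _).symm
    _ = j * y + j * k := by rw [h1]
    _ = j * k := h2

/-- `I` contains a finite product of prime ideals. -/
def ContainsPrimeProd (I : Ideal A) : Prop :=
  ∃ l : List (Ideal A), (∀ P ∈ l, P.IsPrime) ∧ l.prod ≤ I

lemma prime_of_listProd_le {P : Ideal A} (hP : P.IsPrime) :
    ∀ l : List (Ideal A), l.prod ≤ P → ∃ Q ∈ l, Q ≤ P := by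
  intro l
  induction l with
  | nil => intro h; rw [List.prod_nil, Ideal.one_eq_top] at h; exact absurd (top_le_iff.mp h) hP.ne_top
  | cons a l ih =>
      intro h
      rw [List.prod_cons] at h
      by_cases ha : a ≤ P
      · exact ⟨a, List.mem_cons_self, ha⟩
      · obtain ⟨x, hxa, hxP⟩ := Set.not_subset.mp ha
        have hl : l.prod ≤ P := by
          intro y hy
          have : x * y ∈ P := h (Ideal.mul_mem_mul hxa hy)
          exact (hP.mem_or_mem this).resolve_left hxP
        obtain ⟨Q, hQ, hQP⟩ := ih hl
        exact ⟨Q, List.mem_cons_of_mem _ hQ, hQP⟩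

end


section
variable {A : Type*} [CommSemiring A]

lemma exists_maximal_sat (hwn : WeaklyNoetherian A) (T : Set (Ideal A))
    (hT : ∀ I ∈ T, IsSaturated I) (hne : T.Nonempty) :
    ∃ M ∈ T, ∀ J ∈ T, M ≤ J → J = M := by
  by_contra h
  push_neg at h
  obtain ⟨I₀, hI₀⟩ := hne
  have h' : ∀ I : {I // I ∈ T}, ∃ J : {I // I ∈ T}, I.1 ≤ J.1 ∧ J.1 ≠ I.1 := by
    rintro ⟨I, hI⟩
    obtain ⟨J, hJ, hle, hne⟩ := h I hI
    exact ⟨⟨J, hJ⟩, hle, hne⟩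
  choose F hF1 hF2 using h'
  set f : ℕ → {I // I ∈ T} := fun n => F^[n] ⟨I₀, hI₀⟩ with hf
  have hstep : ∀ n, f (n + 1) = F (f n) := fun n => Function.iterate_succ_apply' F n _
  obtain ⟨N, hN⟩ := hwn (fun n => (f n).1)
    (fun n => hT _ (f n).2)
    (fun n => by show (f n).1 ≤ (f (n+1)).1; rw [hstep]; exact hF1 (f n))
  have := hN (N + 1) (Nat.le_succ N)
  rw [hstep] at this
  exact hF2 (f N) this

end

/-- A weakly noetherian `B₁`-algebra has only finitely many minimal prime ideals. -/
theorem minimal_primes_finite {A : Type*} [CommSemiring A]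
    (hchar : (1 : A) + 1 = 1) (hwn : WeaklyNoetherian A) :
    {P : Ideal A | P.IsPrime ∧ ∀ Q : Ideal A, Q.IsPrime → Q ≤ P → Q = P}.Finite := by
  by_cases hex : ∃ P : Ideal A, P.IsPrime
  · obtain ⟨P₀, hP₀⟩ := hex
    -- Every saturated ideal contains a finite product of primes.
    have key : ContainsPrimeProd (⊥ : Ideal A) := by
      by_contra hbot
      set T : Set (Ideal A) := {I | IsSaturated I ∧ ¬ ContainsPrimeProd I} with hTdef
      have hne : T.Nonempty := ⟨⊥, by
        refine ⟨?_, hbot⟩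
        intro x y hy hxy
        simp only [Ideal.mem_bot] at hy ⊢
        rw [hy, add_zero] at hxy; exact hxy⟩
      obtain ⟨M, ⟨hMsat, hMnp⟩, hMmax⟩ := exists_maximal_sat hwn T (fun I hI => hI.1) hne
      -- M is not prime (else [M] would work) and M ≠ ⊤ (else [P₀] works)
      have hMne : M ≠ ⊤ := by
        rintro rfl
        exact hMnp ⟨[P₀], by simp [hP₀], le_top⟩
      have hMnotprime : ¬ M.IsPrime := by
        intro hp
        exact hMnp ⟨[M], by simp [hp], by simp⟩
      rw [Ideal.isPrime_iff] at hMnotprime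
      push_neg at hMnotprime
      obtain ⟨a, b, hab, haM, hbM⟩ := hMnotprime hMne
      -- J, K strictly bigger saturated ideals
      have good : ∀ c : A, c ∉ M → ContainsPrimeProd (satur (M ⊔ Ideal.span {c})) := by
        intro c hc
        by_contra hng
        have hJT : satur (M ⊔ Ideal.span {c}) ∈ T := ⟨satur_isSaturated _, hng⟩
        have hle : M ≤ satur (M ⊔ Ideal.span {c}) :=
          le_trans le_sup_left (le_satur hchar _)
        have := hMmax _ hJT hle
        apply hc
        rw [← this]
        exact le_satur hchar _ (Ideal.mem_sup_right (Ideal.mem_span_singleton_self c))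
      obtain ⟨l₁, hl₁p, hl₁⟩ := good a haM
      obtain ⟨l₂, hl₂p, hl₂⟩ := good b hbM
      apply hMnp
      refine ⟨l₁ ++ l₂, ?_, ?_⟩
      · intro P hP
        rcases List.mem_append.mp hP with h | h
        · exact hl₁p P h
        · exact hl₂p P h
      · rw [List.prod_append]
        have h1 : l₁.prod * l₂.prod ≤ satur ((M ⊔ Ideal.span {a}) * (M ⊔ Ideal.span {b})) :=
          le_trans (mul_le_mul' hl₁ hl₂) (satur_mul_satur_le _ _)
        have h2 : (M ⊔ Ideal.span {a}) * (M ⊔ Ideal.span {b}) ≤ M := by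
          rw [Ideal.sup_mul, Ideal.mul_sup, Ideal.mul_sup]
          refine sup_le (sup_le ?_ ?_) (sup_le ?_ ?_)
          · exact Ideal.mul_le_left
          · exact Ideal.mul_le_left
          · exact Ideal.mul_le_right
          · rw [Ideal.span_singleton_mul_span_singleton]
            exact (Ideal.span_singleton_le_iff_mem M).mpr hab
        exact le_trans h1 (le_trans (satur_mono h2) (satur_le hMsat))
    obtain ⟨l, hlp, hl⟩ := key
    apply Set.Finite.subset l.finite_toSet
    rintro P ⟨hP, hPmin⟩
    obtain ⟨Q, hQl, hQP⟩ := prime_of_listProd_le hP l (le_trans hl bot_le)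
    have := hPmin Q (hlp Q hQl) hQP
    rw [← this]; exact hQl
  · have : {P : Ideal A | P.IsPrime ∧ ∀ Q : Ideal A, Q.IsPrime → Q ≤ P → Q = P} = ∅ := by
      ext P
      simp only [Set.mem_setOf_eq, Set.mem_empty_iff_false, iff_false]
      rintro ⟨hp, -⟩
      exact hex ⟨P, hp⟩
    rw [this]
    exact Set.finite_empty
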